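/- Let V be an N×N complex matrix and let g : ℂ^N → ℂ be permutation invariant. Assume g(v_{f,i}) ≠ 0 for every i = 1,…,N. Then for every N×N permutation matrix P and every λ ∈ ℂ^N, the permutation condition holds: h(P^T λ, V P) = h(λ, V). (Note that the columns of (VP)^H = P^T V^H are the columns of V^H each multiplied by P^T, and g is permutation invariant, so h(·, VP) is also defined.) -/

import Mathlib

open Matrix

/-- `g : ℂ^N → ℂ` is permutation invariant if `g (P x) = g x` for every
permutation matrix `P` and every `x`. -/
def PermInvariant (N : ℕ) (g : (Fin N → ℂ) → ℂ) : Prop :=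
  ∀ (σ : Equiv.Perm (Fin N)) (x : Fin N → ℂ), g ((σ.permMatrix ℂ).mulVec x) = g x

/-- `colDiag g V = diag (g v_1, …, g v_N)` where `v_i` are the columns of `V`. -/
def colDiag (N : ℕ) (g : (Fin N → ℂ) → ℂ) (V : Matrix (Fin N) (Fin N) ℂ) :
    Matrix (Fin N) (Fin N) ℂ :=
  Matrix.diagonal fun i => g fun j => V j i

/-- The eigenvalue map `h(λ, V) = D_f⁻¹ V D λ`, where `D = diag(g(v_i))` with `v_i`
the columns of `V`, and `D_f = diag(g(v_{f,i}))` with `v_{f,i}` the columns of `Vᴴ`. -/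
noncomputable def hMap (N : ℕ) (g : (Fin N → ℂ) → ℂ) (V : Matrix (Fin N) (Fin N) ℂ)
    (lam : Fin N → ℂ) : Fin N → ℂ :=
  ((colDiag N g Vᴴ)⁻¹ * V * colDiag N g V).mulVec lam

lemma permMatrix_mulVec_eq (N : ℕ) (σ : Equiv.Perm (Fin N)) (x : Fin N → ℂ) :
    (σ.permMatrix ℂ).mulVec x = fun j => x (σ j) := by
  funext j
  simp [Matrix.mulVec, dotProduct, PEquiv.toMatrix_apply,
    Equiv.toPEquiv_apply]

/-- Axiom of Permutation (A3): `h(Pᵀ λ, V P) = h(λ, V)`. -/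
theorem permutation_axiom (N : ℕ) (hN : 1 ≤ N) (V : Matrix (Fin N) (Fin N) ℂ)
    (g : (Fin N → ℂ) → ℂ) (hg : PermInvariant N g)
    (hDf : ∀ i, g (fun j => Vᴴ j i) ≠ 0) :
    ∀ (σ : Equiv.Perm (Fin N)) (lam : Fin N → ℂ),
      hMap N g (V * σ.permMatrix ℂ) ((σ.permMatrix ℂ)ᵀ.mulVec lam) = hMap N g V lam := by
  intro σ lam
  have hsub : V * σ.permMatrix ℂ = V.submatrix id σ.symm :=
    PEquiv.mul_toMatrix_toPEquiv V σ
  -- D_f is invariant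
  have hDfeq : colDiag N g (V * σ.permMatrix ℂ)ᴴ = colDiag N g Vᴴ := by
    unfold colDiag
    apply congrArg Matrix.diagonal
    funext i
    have : (fun j => (V * σ.permMatrix ℂ)ᴴ j i)
        = ((σ⁻¹).permMatrix ℂ).mulVec (fun j => Vᴴ j i) := by
      rw [permMatrix_mulVec_eq]
      funext j
      simp only [hsub, Matrix.conjTranspose_apply, Matrix.submatrix_apply, id_eq]
      rfl
    rw [this]
    exact hg σ⁻¹ _
  -- transpose of permutation matrix
  have hPT : (σ.permMatrix ℂ)ᵀ = (σ⁻¹).permMatrix ℂ := by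
    rw [← PEquiv.toMatrix_symm]
    congr 1
  -- the middle identity
  have key : (V * σ.permMatrix ℂ) * colDiag N g (V * σ.permMatrix ℂ) * (σ.permMatrix ℂ)ᵀ
      = V * colDiag N g V := by
    rw [hPT]
    have h2 : ((V * σ.permMatrix ℂ) * colDiag N g (V * σ.permMatrix ℂ)) * (σ⁻¹).permMatrix ℂ
        = ((V * σ.permMatrix ℂ) * colDiag N g (V * σ.permMatrix ℂ)).submatrix id (σ⁻¹).symm :=
      PEquiv.mul_toMatrix_toPEquiv _ σ⁻¹
    rw [h2]
    ext i j
    simp [colDiag, Matrix.mul_diagonal, hsub, Matrix.submatrix_apply,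
      Equiv.Perm.inv_def, Equiv.symm_symm, Equiv.symm_apply_apply]
  unfold hMap
  rw [hDfeq, Matrix.mulVec_mulVec]
  simp only [mul_assoc] at key ⊢
  rw [key]
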